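/- Let n and κ ≥ 2 be positive integers, let B = diag(β₁,…,β_n) be a real diagonal n × n matrix with β₁ = 0 and β_k < 0 for all k ≥ 2, and let K be a real n × κ matrix of rank κ. Then the map t ↦ Kᵀ·exp(Bt)·K is injective on [0,∞): if t₁, t₂ ≥ 0 and Kᵀ·exp(Bt₁)·K = Kᵀ·exp(Bt₂)·K, then t₁ = t₂. -/

import Mathlib

open Matrix

lemma exp_smul_diagonal {n : ℕ} (t : ℝ) (β : Fin n → ℝ) :
    NormedSpace.exp (t • Matrix.diagonal β) =
      Matrix.diagonal (fun i => Real.exp (t * β i)) := by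
  rw [← Matrix.diagonal_smul, Matrix.exp_diagonal]
  congr 1
  ext i
  rw [Pi.exp_def, Real.exp_eq_exp_ℝ]
  simp

/-- Edge lengths are identifiable: the map `t ↦ Kᵀ·exp(Bt)·K` is injective on
`[0,∞)` when `B = diag(β)` with `β₁ = 0`, `β_k < 0` for `k ≥ 2`, and `K` has
rank `κ ≥ 2`. -/
theorem edge_length_identifiable {n κ : ℕ} (hn : 0 < n) (hκ : 2 ≤ κ)
    (β : Fin n → ℝ) (hβ0 : β ⟨0, hn⟩ = 0)
    (hβneg : ∀ k : Fin n, (k : ℕ) ≠ 0 → β k < 0)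
    (K : Matrix (Fin n) (Fin κ) ℝ) (hK : K.rank = κ)
    (t₁ t₂ : ℝ) (ht₁ : 0 ≤ t₁) (ht₂ : 0 ≤ t₂)
    (heq : Kᵀ * NormedSpace.exp (t₁ • Matrix.diagonal β) * K =
      Kᵀ * NormedSpace.exp (t₂ • Matrix.diagonal β) * K) :
    t₁ = t₂ := by
  -- mulVecLin K is injective
  have hinj : Function.Injective K.mulVecLin := by
    rw [← LinearMap.ker_eq_bot]
    have h1 := LinearMap.finrank_range_add_finrank_ker K.mulVecLin
    rw [Matrix.rank] at hK
    rw [hK, Module.finrank_pi, Fintype.card_fin] at h1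
    have h0 : Module.finrank ℝ (LinearMap.ker K.mulVecLin) = 0 := by omega
    exact Submodule.finrank_eq_zero.mp h0
  -- find nonzero v with (K *ᵥ v) at index 0 equal to 0
  set f : (Fin κ → ℝ) →ₗ[ℝ] ℝ :=
    (LinearMap.proj ⟨0, hn⟩ : (Fin n → ℝ) →ₗ[ℝ] ℝ).comp K.mulVecLin with hf
  obtain ⟨v, hvker, hvne⟩ : ∃ v, v ∈ LinearMap.ker f ∧ v ≠ 0 := by
    apply Submodule.exists_mem_ne_zero_of_ne_bot
    intro hbot
    have h1 := LinearMap.finrank_range_add_finrank_ker f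
    rw [hbot, finrank_bot, Module.finrank_pi, Fintype.card_fin] at h1
    have h2 : Module.finrank ℝ (LinearMap.range f) ≤ Module.finrank ℝ ℝ :=
      Submodule.finrank_le _
    rw [Module.finrank_self] at h2
    omega
  set w : Fin n → ℝ := K *ᵥ v with hw
  have hw0 : w ⟨0, hn⟩ = 0 := hvker
  have hwne : w ≠ 0 := by
    intro h
    exact hvne (hinj (by simpa [hw] using h))
  obtain ⟨i₀, hi₀⟩ : ∃ i, w i ≠ 0 := Function.ne_iff.mp hwne
  have hi₀0 : (i₀ : ℕ) ≠ 0 := by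
    intro h
    exact hi₀ (by rwa [show i₀ = ⟨0, hn⟩ from Fin.ext h])
  -- quadratic form equation
  have key : ∀ t : ℝ, v ⬝ᵥ (Kᵀ * NormedSpace.exp (t • Matrix.diagonal β) * K) *ᵥ v
      = ∑ i, Real.exp (t * β i) * w i ^ 2 := by
    intro t
    rw [exp_smul_diagonal, ← Matrix.mulVec_mulVec, ← Matrix.mulVec_mulVec,
      dotProduct_mulVec, Matrix.vecMul_transpose]
    simp [dotProduct, Matrix.mulVec_diagonal, hw]
    congr 1; ext i; ring
  have hsum : ∑ i, Real.exp (t₁ * β i) * w i ^ 2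
      = ∑ i, Real.exp (t₂ * β i) * w i ^ 2 := by
    rw [← key t₁, ← key t₂, heq]
  -- now conclude by strict monotonicity
  by_contra hne
  -- wlog t₁ < t₂
  rcases lt_or_gt_of_ne hne with hlt | hlt
  all_goals {
    have main : ∀ s₁ s₂ : ℝ, s₁ < s₂ →
        ∑ i, Real.exp (s₂ * β i) * w i ^ 2 < ∑ i, Real.exp (s₁ * β i) * w i ^ 2 := by
      intro s₁ s₂ hs
      apply Finset.sum_lt_sum
      · intro i _
        rcases eq_or_ne (i : ℕ) 0 with h | h
        · rw [show i = ⟨0, hn⟩ from Fin.ext h, hβ0]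
          simp [hw0]
        · have hβ := hβneg i h
          have : s₂ * β i ≤ s₁ * β i := by nlinarith
          exact mul_le_mul_of_nonneg_right (Real.exp_le_exp.mpr this) (sq_nonneg _)
      · refine ⟨i₀, Finset.mem_univ _, ?_⟩
        have hβ := hβneg i₀ hi₀0
        have h1 : s₂ * β i₀ < s₁ * β i₀ := by nlinarith
        have h2 : 0 < w i₀ ^ 2 := (sq_abs (w i₀)) ▸ pow_pos (abs_pos.mpr hi₀) 2
        exact mul_lt_mul_of_pos_right (Real.exp_lt_exp.mpr h1) h2
    first
    | exact absurd hsum (ne_of_gt (main t₁ t₂ hlt))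
    | exact absurd hsum (ne_of_lt (main t₂ t₁ hlt))
  }
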